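/- Let k ≥ 1 and let (Q_1, …, Q_n) be a critical fit sequence of a finite weighted set P (weights in {0,…,k−1}, each w(Q_j) < k, no two consecutive non-jumps). If the landmarks of the sequence are 0 = q_1 < q_2 < … < q_ℓ ≤ ⌊w(P)/k⌋, then ℓ = n − ⌊w(P)/k⌋, and for every r ∈ [ℓ], the partial sum satisfies q_r·k ≤ w(Q_1 ∪ … ∪ Q_{q_r + r}) < (q_r + 1)·k. -/

import Mathlib

open Finset

/-- The weight of the union of the first `m` terms of the sequence `Q`. -/
def partialW {V : Type*} (w : V → ℕ) {n : ℕ} (Q : Fin n → Finset V) (m : ℕ) : ℕ :=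
  ∑ i ∈ Finset.univ.filter (fun i : Fin n => (i : ℕ) < m), ∑ v ∈ Q i, w v

/-- The `j`-th term (`1 ≤ j ≤ n`) is a non-jump: the floor of the partial weight
divided by `k` does not increase at step `j`. -/
def NonJump {V : Type*} (k : ℕ) (w : V → ℕ) {n : ℕ} (Q : Fin n → Finset V)
    (j : ℕ) : Prop :=
  partialW w Q j / k = partialW w Q (j - 1) / k

/-- Let `(Q_1, …, Q_n)` be a critical fit sequence of a finite weighted set `P` (weights
in `{0,…,k−1}`, each term nonempty of weight `< k`, no two consecutive non-jumps), and
let `0 = q_1 < q_2 < … < q_ℓ ≤ ⌊w(P)/k⌋` be its landmarks (the values `⌊w_j/k⌋` at the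
non-jumps `j`).  Then `ℓ = n − ⌊w(P)/k⌋` and for every `r ∈ [ℓ]`,
`q_r·k ≤ w(Q_1 ∪ … ∪ Q_{q_r + r}) < (q_r + 1)·k`. -/
lemma partialW_zero {V : Type*} (w : V → ℕ) {n : ℕ} (Q : Fin n → Finset V) :
    partialW w Q 0 = 0 := by
  unfold partialW; simp

lemma partialW_succ {V : Type*} (w : V → ℕ) {n : ℕ} (Q : Fin n → Finset V)
    {m : ℕ} (hm : m < n) :
    partialW w Q (m + 1) = partialW w Q m + ∑ v ∈ Q ⟨m, hm⟩, w v := by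
  unfold partialW
  have h : Finset.univ.filter (fun i : Fin n => (i : ℕ) < m + 1)
      = insert ⟨m, hm⟩ (Finset.univ.filter (fun i : Fin n => (i : ℕ) < m)) := by
    ext i
    simp only [Finset.mem_filter, Finset.mem_univ, true_and, Finset.mem_insert, Fin.ext_iff]
    omega
  rw [h, Finset.sum_insert (by simp)]
  ring

lemma partialW_mono {V : Type*} (w : V → ℕ) {n : ℕ} (Q : Fin n → Finset V) :
    Monotone (partialW w Q) := by
  intro a b hab
  exact Finset.sum_le_sum_of_subset
    (Finset.monotone_filter_right _ (fun i _ hi => lt_of_lt_of_le hi hab))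

theorem critical_sequence_landmarks {V : Type*} [DecidableEq V]
    (k : ℕ) (hk : 1 ≤ k) (P : Finset V) (w : V → ℕ) (hw : ∀ v ∈ P, w v < k)
    (n : ℕ) (hn : 1 ≤ n) (Q : Fin n → Finset V)
    (hne : ∀ i, (Q i).Nonempty)
    (hdisj : ∀ i j, i ≠ j → Disjoint (Q i) (Q j))
    (hunion : Finset.univ.biUnion Q = P)
    (hfit : ∀ i, ∑ v ∈ Q i, w v < k)
    (hcrit : ∀ j : ℕ, 1 ≤ j → j + 1 ≤ n → ¬ (NonJump k w Q j ∧ NonJump k w Q (j + 1)))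
    (ℓ : ℕ) (hℓ : 0 < ℓ) (q : Fin ℓ → ℕ)
    (hq0 : q ⟨0, hℓ⟩ = 0) (hqmono : StrictMono q)
    (hqle : ∀ r, q r ≤ partialW w Q n / k)
    (hland : ∀ m : ℕ,
      (∃ j : ℕ, 1 ≤ j ∧ j ≤ n ∧ NonJump k w Q j ∧ partialW w Q j / k = m) ↔
        ∃ r : Fin ℓ, q r = m) :
    ℓ + partialW w Q n / k = n ∧
      ∀ r : Fin ℓ, q r * k ≤ partialW w Q (q r + ((r : ℕ) + 1)) ∧
        partialW w Q (q r + ((r : ℕ) + 1)) < (q r + 1) * k := by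
  classical
  set f : ℕ → ℕ := fun m => partialW w Q m / k with hf
  have hk0 : 0 < k := hk
  have hfmono : Monotone f := fun a b hab =>
    Nat.div_le_div_right (partialW_mono w Q hab)
  -- each step is a jump or a non-jump
  have hstep : ∀ m : ℕ, m < n → f (m + 1) = f m ∨ f (m + 1) = f m + 1 := by
    intro m hm
    have hW := partialW_succ w Q hm
    have hs : ∑ v ∈ Q ⟨m, hm⟩, w v < k := hfit _
    have h1 : f m ≤ f (m + 1) := hfmono (Nat.le_succ m)
    have h2 : f (m + 1) < f m + 2 := by
      have hlt : partialW w Q (m + 1) < (partialW w Q m / k + 2) * k := by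
        have hdm := Nat.div_add_mod (partialW w Q m) k
        have hmod := Nat.mod_lt (partialW w Q m) hk0
        have : (partialW w Q m / k + 2) * k
            = k * (partialW w Q m / k) + k + k := by ring
        omega
      have := (Nat.div_lt_iff_lt_mul hk0).2 hlt
      simpa [hf] using this
    omega
  have hNJ_iff : ∀ m : ℕ, NonJump k w Q (m + 1) ↔ f (m + 1) = f m := by
    intro m
    simp only [NonJump, hf, Nat.add_sub_cancel]
  -- counting: for every m ≤ n, f m + (number of non-jumps ≤ m) = m
  have hcount : ∀ m : ℕ, m ≤ n →
      f m + ((Finset.Icc 1 m).filter (fun j => NonJump k w Q j)).card = m := by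
    intro m
    induction m with
    | zero => intro _; simp [hf, partialW_zero]
    | succ m ih =>
      intro hm
      have ihm := ih (by omega)
      have hins : Finset.Icc 1 (m + 1) = insert (m + 1) (Finset.Icc 1 m) := by
        ext x
        simp only [Finset.mem_Icc, Finset.mem_insert]
        omega
      rw [hins, Finset.filter_insert]
      rcases hstep m (by omega) with h | h
      · rw [if_pos ((hNJ_iff m).2 h),
          Finset.card_insert_of_notMem (by simp [Finset.mem_filter])]
        omega
      · rw [if_neg (fun hNJ => by have := (hNJ_iff m).1 hNJ; omega)]
        omega
  -- f is strictly increasing on non-jumps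
  have hJlt : ∀ j j' : ℕ, 1 ≤ j → j ≤ n → NonJump k w Q j →
      1 ≤ j' → j' ≤ n → NonJump k w Q j' → j < j' → f j < f j' := by
    intro j j' hj1 hjn hNJ hj'1 hj'n hNJ' hlt
    have h2 : j + 2 ≤ j' := by
      by_contra h
      have hjj : j' = j + 1 := by omega
      exact hcrit j hj1 (by omega) ⟨hNJ, hjj ▸ hNJ'⟩
    have hjump : f (j + 1) = f j + 1 := by
      rcases hstep j (by omega) with h | h
      · exact absurd ⟨hNJ, (hNJ_iff j).2 h⟩ (hcrit j hj1 (by omega))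
      · exact h
    have := hfmono (show j + 1 ≤ j' by omega)
    omega
  -- the set of non-jumps
  set J : Finset ℕ := (Finset.Icc 1 n).filter (fun j => NonJump k w Q j) with hJdef
  have hmemJ : ∀ j, j ∈ J ↔ (1 ≤ j ∧ j ≤ n ∧ NonJump k w Q j) := by
    intro j
    simp only [hJdef, Finset.mem_filter, Finset.mem_Icc]
    tauto
  have hJcard : f n + J.card = n := hcount n le_rfl
  have hinjJ : Set.InjOn f ↑J := by
    intro a ha b hb hab
    rw [Finset.mem_coe, hmemJ] at ha hb
    by_contra hne'
    rcases Nat.lt_or_ge a b with h | h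
    · have := hJlt a b ha.1 ha.2.1 ha.2.2 hb.1 hb.2.1 hb.2.2 h; omega
    · have hba : b < a := by omega
      have := hJlt b a hb.1 hb.2.1 hb.2.2 ha.1 ha.2.1 ha.2.2 hba; omega
  -- the image of q equals the image of f on J
  have hqimage : Finset.image q Finset.univ = J.image f := by
    ext m
    simp only [Finset.mem_image, Finset.mem_univ, true_and]
    constructor
    · rintro ⟨r, rfl⟩
      obtain ⟨j, hj1, hjn, hNJ, hfj⟩ := (hland (q r)).mpr ⟨r, rfl⟩
      exact ⟨j, (hmemJ j).2 ⟨hj1, hjn, hNJ⟩, hfj⟩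
    · rintro ⟨j, hjJ, hfj⟩
      rw [hmemJ] at hjJ
      exact (hland m).mp ⟨j, hjJ.1, hjJ.2.1, hjJ.2.2, hfj⟩
  have hcardJ : J.card = ℓ := by
    have h1 : (Finset.image q Finset.univ).card = ℓ := by
      rw [Finset.card_image_of_injective _ hqmono.injective, Finset.card_univ,
        Fintype.card_fin]
    have h2 : (J.image f).card = J.card := Finset.card_image_of_injOn hinjJ
    rw [hqimage, h2] at h1
    exact h1
  have hscard : (J.image f).card = ℓ := by
    rw [Finset.card_image_of_injOn hinjJ, hcardJ]
  set e : Fin ℓ ↪o ℕ := J.orderEmbOfFin hcardJ with he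
  have heJ : ∀ r : Fin ℓ, e r ∈ J := fun r => Finset.orderEmbOfFin_mem J hcardJ r
  have hqe : ∀ r : Fin ℓ, q r = f (e r) := by
    have h1 : q = (J.image f).orderEmbOfFin hscard :=
      Finset.orderEmbOfFin_unique hscard
        (fun x => by rw [← hqimage]; exact Finset.mem_image_of_mem q (Finset.mem_univ x))
        hqmono
    have h2 : (fun r : Fin ℓ => f (e r)) = (J.image f).orderEmbOfFin hscard :=
      Finset.orderEmbOfFin_unique hscard
        (fun x => Finset.mem_image_of_mem f (heJ x))
        (by
          intro a b hab
          have ha := (hmemJ (e a)).1 (heJ a)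
          have hb := (hmemJ (e b)).1 (heJ b)
          exact hJlt (e a) (e b) ha.1 ha.2.1 ha.2.2 hb.1 hb.2.1 hb.2.2
            (e.strictMono hab))
    intro r
    rw [h1, ← h2]
  constructor
  · rw [← hcardJ]
    have hfn : partialW w Q n / k = f n := rfl
    rw [hfn]
    omega
  · intro r
    set j : ℕ := e r with hj
    have hjJ := (hmemJ j).1 (heJ r)
    have hfj : f j = q r := (hqe r).symm
    -- the non-jumps up to j are exactly e of the first r+1 indices
    have hfilter : (Finset.Icc 1 j).filter (fun x => NonJump k w Q x)
        = Finset.image e (Finset.Iic r) := by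
      ext x
      simp only [Finset.mem_filter, Finset.mem_Icc, Finset.mem_image, Finset.mem_Iic]
      constructor
      · rintro ⟨⟨hx1, hxj⟩, hNJx⟩
        have hxJ : x ∈ J := (hmemJ x).2 ⟨hx1, le_trans hxj hjJ.2.1, hNJx⟩
        have : x ∈ Set.range e := by
          rw [he, Finset.range_orderEmbOfFin]
          exact hxJ
        obtain ⟨i, hi⟩ := this
        refine ⟨i, ?_, hi⟩
        have : e i ≤ e r := by rw [hi]; exact hxj
        exact e.le_iff_le.1 this
      · rintro ⟨i, hir, rfl⟩
        have hiJ := (hmemJ (e i)).1 (heJ i)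
        exact ⟨⟨hiJ.1, e.le_iff_le.2 hir⟩, hiJ.2.2⟩
    have hcard2 : ((Finset.Icc 1 j).filter (fun x => NonJump k w Q x)).card
        = (r : ℕ) + 1 := by
      rw [hfilter, Finset.card_image_of_injective _ e.injective, Fin.card_Iic]
    have hjeq : f j + ((r : ℕ) + 1) = j := by
      have := hcount j hjJ.2.1
      omega
    rw [hfj] at hjeq
    rw [hjeq]
    have hdm := Nat.div_add_mod (partialW w Q j) k
    have hmod := Nat.mod_lt (partialW w Q j) hk0
    have hqk : partialW w Q j / k = q r := hfj
    constructor
    · calc q r * k = partialW w Q j / k * k := by rw [hqk]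
        _ ≤ partialW w Q j := Nat.div_mul_le_self _ _
    · have : partialW w Q j < (partialW w Q j / k + 1) * k := by
        have : (partialW w Q j / k + 1) * k = k * (partialW w Q j / k) + k := by ring
        omega
      calc partialW w Q j < (partialW w Q j / k + 1) * k := this
        _ = (q r + 1) * k := by rw [hqk]
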